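/- The limit of Q(t)/t as t → 0 from the right exists and equals 4/3 + π + 3·∫₀¹ (log s)·(1−s)^{1/2} ds, and this limit is strictly positive. -/

import Mathlib

open MeasureTheory Filter Set Real intervalIntegral

-- measurability helpers
lemma meas_sqrt1 : Measurable fun s : ℝ => Real.sqrt (1 - s) :=
  (Real.continuous_sqrt.comp (continuous_const.sub continuous_id)).measurable

lemma sqrt_le_one' {s : ℝ} (hs : 0 ≤ s) : Real.sqrt (1 - s) ≤ 1 := by
  have : Real.sqrt (1-s) ≤ Real.sqrt 1 := Real.sqrt_le_sqrt (by linarith)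
  simpa using this

lemma bound_int : IntegrableOn (fun s : ℝ => 4 * s ^ (-(1/4) : ℝ)) (Ioc 0 1) := by
  have := (intervalIntegral.intervalIntegrable_rpow' (a := 0) (b := 1)
      (r := -(1/4)) (by norm_num)).const_mul 4
  exact (intervalIntegrable_iff_integrableOn_Ioc_of_le zero_le_one).1 this

lemma neg_log_le {s : ℝ} (hs : 0 < s) (hs1 : s ≤ 1) : -Real.log s ≤ 4 * s ^ (-(1/4) : ℝ) - 4 := by
  have h1 : Real.log (s ^ (-(1/4) : ℝ)) ≤ s ^ (-(1/4) : ℝ) - 1 :=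
    Real.log_le_sub_one_of_pos (Real.rpow_pos_of_pos hs _)
  rw [Real.log_rpow hs] at h1
  linarith

lemma abs_log_le {s : ℝ} (hs : 0 < s) (hs1 : s ≤ 1) : |Real.log s| ≤ 4 * s ^ (-(1/4) : ℝ) := by
  have h0 : Real.log s ≤ 0 := Real.log_nonpos hs.le hs1
  rw [abs_of_nonpos h0]
  have := neg_log_le hs hs1
  linarith

lemma logsqrt_int : IntegrableOn (fun s : ℝ => Real.log s * Real.sqrt (1 - s)) (Ioc 0 1) := by
  refine Integrable.mono' bound_int
    ((Real.measurable_log.mul meas_sqrt1).aestronglyMeasurable) ?_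
  filter_upwards [ae_restrict_mem measurableSet_Ioc] with s hs
  have h1 : |Real.log s| ≤ 4 * s ^ (-(1/4) : ℝ) := abs_log_le hs.1 hs.2
  have h2 : Real.sqrt (1 - s) ≤ 1 := sqrt_le_one' hs.1.le
  have h3 : (0:ℝ) ≤ Real.sqrt (1 - s) := Real.sqrt_nonneg _
  rw [Real.norm_eq_abs, abs_mul, abs_of_nonneg h3]
  calc |Real.log s| * Real.sqrt (1-s) ≤ |Real.log s| * 1 := by
        exact mul_le_mul_of_nonneg_left h2 (abs_nonneg _)
    _ ≤ 4 * s ^ (-(1/4) : ℝ) := by simpa using h1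

-- sin slope
lemma sin_slope (c : ℝ) : Tendsto (fun t : ℝ => Real.sin (t * c) / t)
    (nhdsWithin 0 (Ioi 0)) (nhds c) := by
  have hd : HasDerivAt (fun t : ℝ => Real.sin (t * c)) c 0 := by
    have := (Real.hasDerivAt_sin ((0:ℝ) * c)).comp 0 ((hasDerivAt_id (0:ℝ)).mul_const c)
    simpa [Function.comp_def] using this
  rw [hasDerivAt_iff_tendsto_slope] at hd
  have hd2 := hd.mono_left (nhdsWithin_mono 0 (fun x (hx : x ∈ Ioi 0) => hx.ne'))
  refine hd2.congr (fun t => ?_)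
  simp [slope_def_field]

lemma tanh_slope : Tendsto (fun t : ℝ => Real.tanh (Real.pi * t / 2) / t)
    (nhdsWithin 0 (Ioi 0)) (nhds (Real.pi / 2)) := by
  have hd : HasDerivAt Real.tanh 1 0 := by
    have h := (Real.hasDerivAt_sinh 0).div (Real.hasDerivAt_cosh 0) (by simp)
    have he : (Real.sinh / Real.cosh) = Real.tanh :=
      funext fun x => (Real.tanh_eq_sinh_div_cosh x).symm
    rw [he] at h
    simpa using h
  rw [hasDerivAt_iff_tendsto_slope] at hd
  have hmap : Tendsto (fun t : ℝ => Real.pi * t / 2) (nhdsWithin 0 (Ioi 0))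
      (nhdsWithin 0 ({(0:ℝ)}ᶜ)) := by
    rw [tendsto_nhdsWithin_iff]
    constructor
    · have : Tendsto (fun t : ℝ => Real.pi * t / 2) (nhds 0) (nhds (Real.pi * 0 / 2)) :=
        ((continuous_const.mul continuous_id).div_const 2).tendsto 0
      simpa using this.mono_left nhdsWithin_le_nhds
    · filter_upwards [self_mem_nhdsWithin] with t (ht : t ∈ Ioi 0)
      have ht0 : (0:ℝ) < t := ht
      have : 0 < Real.pi * t / 2 := by positivity
      exact this.ne'
  have h2 : Tendsto (fun t : ℝ => Real.tanh (Real.pi * t / 2) / (Real.pi * t / 2))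
      (nhdsWithin 0 (Ioi 0)) (nhds 1) := by
    have := hd.comp hmap
    refine this.congr (fun t => ?_)
    simp [slope_def_field, Real.tanh_zero, Function.comp]
  have h3 := h2.const_mul (Real.pi / 2)
  rw [mul_one] at h3
  refine h3.congr' ?_
  filter_upwards [self_mem_nhdsWithin] with t (ht : t ∈ Ioi 0)
  have hπ : Real.pi ≠ 0 := Real.pi_ne_zero
  have ht' : (t:ℝ) ≠ 0 := ht.ne'
  field_simp

lemma sqrt_int_val : (∫ s in (0:ℝ)..1, Real.sqrt (1 - s)) = 2/3 := by
  have h := intervalIntegral.integral_comp_sub_left (fun x => Real.sqrt x) 1 (a := 0) (b := 1)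
  rw [show (1:ℝ)-1 = 0 by norm_num, show (1:ℝ)-0 = 1 by norm_num] at h
  rw [h]
  rw [intervalIntegral.integral_congr (g := fun x : ℝ => x ^ ((1:ℝ)/2))
    (fun x hx => ?_)]
  · rw [integral_rpow (Or.inl (by norm_num))]
    norm_num
  · have hx0 : (0:ℝ) ≤ x := by
      rcases hx with ⟨h1, h2⟩
      simpa using h1
    simpa using Real.sqrt_eq_rpow x

lemma rpow_int_val : (∫ s in (0:ℝ)..1, (4 - 4 * s ^ (-(1/4) : ℝ))) = -(4/3) := by
  have h1 : IntervalIntegrable (fun s : ℝ => (4:ℝ)) volume 0 1 := intervalIntegrable_const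
  have h2 : IntervalIntegrable (fun s : ℝ => 4 * s ^ (-(1/4) : ℝ)) volume 0 1 :=
    (intervalIntegral.intervalIntegrable_rpow' (by norm_num)).const_mul 4
  rw [intervalIntegral.integral_sub h1 h2, intervalIntegral.integral_const_mul,
    integral_rpow (Or.inl (by norm_num))]
  norm_num

lemma hC_tendsto : Tendsto (fun t : ℝ => ∫ s in (0:ℝ)..1, Real.cos (t * Real.log s) * Real.sqrt (1 - s))
    (nhdsWithin 0 (Ioi 0)) (nhds (2/3)) := by
  have key : Tendsto (fun t : ℝ => ∫ s in Ioc (0:ℝ) 1, Real.cos (t * Real.log s) * Real.sqrt (1 - s))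
      (nhdsWithin 0 (Ioi 0)) (nhds (∫ s in Ioc (0:ℝ) 1, Real.sqrt (1 - s))) := by
    apply MeasureTheory.tendsto_integral_filter_of_dominated_convergence (fun _ => (1:ℝ))
    · filter_upwards with t
      exact ((Real.measurable_cos.comp (Real.measurable_log.const_mul t)).mul
        meas_sqrt1).aestronglyMeasurable
    · filter_upwards with t
      filter_upwards [ae_restrict_mem measurableSet_Ioc] with s hs
      rw [Real.norm_eq_abs, abs_mul]
      have := Real.abs_cos_le_one (t * Real.log s)
      have h2 : |Real.sqrt (1-s)| ≤ 1 := by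
        rw [abs_of_nonneg (Real.sqrt_nonneg _)]; exact sqrt_le_one' hs.1.le
      nlinarith [abs_nonneg (Real.cos (t * Real.log s)), abs_nonneg (Real.sqrt (1-s))]
    · simp [integrableOn_const]
    · filter_upwards with s
      have : Tendsto (fun t : ℝ => Real.cos (t * Real.log s)) (nhdsWithin 0 (Ioi 0))
          (nhds (Real.cos (0 * Real.log s))) :=
        ((Real.continuous_cos.comp (continuous_id.mul continuous_const)).tendsto 0).mono_left
          nhdsWithin_le_nhds
      simpa using this.mul_const (Real.sqrt (1 - s))
  have heq : (∫ s in Ioc (0:ℝ) 1, Real.sqrt (1 - s)) = 2/3 := by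
    rw [← intervalIntegral.integral_of_le zero_le_one]; exact sqrt_int_val
  rw [heq] at key
  refine key.congr (fun t => ?_)
  rw [intervalIntegral.integral_of_le zero_le_one]

lemma hS_tendsto : Tendsto (fun t : ℝ => ∫ s in (0:ℝ)..1, Real.sin (t * Real.log s) / t * Real.sqrt (1 - s))
    (nhdsWithin 0 (Ioi 0)) (nhds (∫ s in (0:ℝ)..1, Real.log s * Real.sqrt (1 - s))) := by
  have key : Tendsto (fun t : ℝ => ∫ s in Ioc (0:ℝ) 1, Real.sin (t * Real.log s) / t * Real.sqrt (1 - s))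
      (nhdsWithin 0 (Ioi 0)) (nhds (∫ s in Ioc (0:ℝ) 1, Real.log s * Real.sqrt (1 - s))) := by
    apply MeasureTheory.tendsto_integral_filter_of_dominated_convergence
      (fun s => 4 * s ^ (-(1/4) : ℝ))
    · filter_upwards with t
      exact (((Real.measurable_sin.comp (Real.measurable_log.const_mul t)).div_const t).mul
        meas_sqrt1).aestronglyMeasurable
    · filter_upwards [self_mem_nhdsWithin] with t (ht : t ∈ Ioi 0)
      have ht0 : (0:ℝ) < t := ht
      filter_upwards [ae_restrict_mem measurableSet_Ioc] with s hs
      have h1 : |Real.sin (t * Real.log s)| ≤ |t * Real.log s| := Real.abs_sin_le_abs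
      have h2 : |Real.sqrt (1-s)| ≤ 1 := by
        rw [abs_of_nonneg (Real.sqrt_nonneg _)]; exact sqrt_le_one' hs.1.le
      have h3 : |Real.log s| ≤ 4 * s ^ (-(1/4) : ℝ) := abs_log_le hs.1 hs.2
      rw [Real.norm_eq_abs, abs_mul, abs_div, abs_of_pos ht0]
      calc |Real.sin (t * Real.log s)| / t * |Real.sqrt (1-s)|
          ≤ |Real.sin (t * Real.log s)| / t * 1 := by
            apply mul_le_mul_of_nonneg_left h2 (by positivity)
        _ = |Real.sin (t * Real.log s)| / t := mul_one _
        _ ≤ |t * Real.log s| / t := by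
            gcongr
        _ = |Real.log s| := by
            rw [abs_mul, abs_of_pos ht0, mul_comm, mul_div_assoc, div_self ht0.ne', mul_one]
        _ ≤ 4 * s ^ (-(1/4) : ℝ) := h3
    · exact bound_int
    · filter_upwards with s
      exact (sin_slope (Real.log s)).mul_const (Real.sqrt (1 - s))
  have h1 : (∫ s in Ioc (0:ℝ) 1, Real.log s * Real.sqrt (1 - s))
      = ∫ s in (0:ℝ)..1, Real.log s * Real.sqrt (1 - s) :=
    (intervalIntegral.integral_of_le zero_le_one).symm
  rw [h1] at key
  refine key.congr (fun t => ?_)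
  rw [intervalIntegral.integral_of_le zero_le_one]

lemma L_ge : -(4/3 : ℝ) ≤ ∫ s in (0:ℝ)..1, Real.log s * Real.sqrt (1 - s) := by
  have hfint : IntegrableOn (fun s : ℝ => 4 - 4 * s ^ (-(1/4) : ℝ)) (Ioc 0 1) :=
    (integrableOn_const measure_Ioc_lt_top.ne).sub bound_int
  have hmono := setIntegral_mono_on hfint logsqrt_int measurableSet_Ioc (fun s hs => ?_)
  · have hval : (∫ s in Ioc (0:ℝ) 1, (4 - 4 * s ^ (-(1/4) : ℝ))) = -(4/3 : ℝ) := by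
      rw [← intervalIntegral.integral_of_le zero_le_one]; exact rpow_int_val
    rw [intervalIntegral.integral_of_le zero_le_one]
    rw [hval] at hmono
    exact hmono
  · have h1 := neg_log_le hs.1 hs.2
    have h2 : Real.log s ≤ 0 := Real.log_nonpos hs.1.le hs.2
    have h3 : Real.sqrt (1 - s) ≤ 1 := sqrt_le_one' hs.1.le
    have h4 : (0:ℝ) ≤ Real.sqrt (1 - s) := Real.sqrt_nonneg _
    nlinarith


/-- The function
`Q(t) = (∫₀¹ cos(t log s)(1−s)^{1/2} ds)(2t + 3 tanh(πt/2))
      + (∫₀¹ sin(t log s)(1−s)^{1/2} ds)(3 − 2t tanh(πt/2))`. -/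
noncomputable def Q (t : ℝ) : ℝ :=
  (∫ s in (0:ℝ)..1, Real.cos (t * Real.log s) * Real.sqrt (1 - s)) *
    (2 * t + 3 * Real.tanh (Real.pi * t / 2)) +
  (∫ s in (0:ℝ)..1, Real.sin (t * Real.log s) * Real.sqrt (1 - s)) *
    (3 - 2 * t * Real.tanh (Real.pi * t / 2))

/-- The limit of `Q(t)/t` as `t → 0⁺` exists, equals
`4/3 + π + 3·∫₀¹ (log s)(1−s)^{1/2} ds`, and is strictly positive. -/
theorem Q_div_t_tendsto :
    Filter.Tendsto (fun t => Q t / t) (nhdsWithin 0 (Set.Ioi 0))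
      (nhds (4 / 3 + Real.pi +
        3 * ∫ s in (0:ℝ)..1, Real.log s * Real.sqrt (1 - s))) ∧
    0 < 4 / 3 + Real.pi + 3 * ∫ s in (0:ℝ)..1, Real.log s * Real.sqrt (1 - s) := by
  set L := ∫ s in (0:ℝ)..1, Real.log s * Real.sqrt (1 - s) with hLdef
  constructor
  · have htanh0 : Tendsto (fun t : ℝ => Real.tanh (Real.pi * t / 2))
        (nhdsWithin 0 (Ioi 0)) (nhds 0) := by
      have hc : Continuous fun t : ℝ => Real.tanh (Real.pi * t / 2) := by
        have : Real.tanh = fun x => Real.sinh x / Real.cosh x :=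
          funext fun x => Real.tanh_eq_sinh_div_cosh x
        rw [this]
        exact ((Real.continuous_sinh.div Real.continuous_cosh (fun x => (Real.cosh_pos x).ne')).comp
          ((continuous_const.mul continuous_id).div_const 2))
      have := (hc.tendsto 0).mono_left (nhdsWithin_le_nhds (s := Ioi (0:ℝ)))
      simpa using this
    have ht_id : Tendsto (fun t : ℝ => t) (nhdsWithin 0 (Ioi 0)) (nhds 0) :=
      tendsto_id.mono_left nhdsWithin_le_nhds
    have hA := hC_tendsto.mul ((tendsto_const_nhds (x := (2:ℝ))).add (tanh_slope.const_mul 3))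
    have hB := hS_tendsto.mul ((tendsto_const_nhds (x := (3:ℝ))).sub ((ht_id.mul htanh0).const_mul 2))
    have hsum := hA.add hB
    have hval : (2/3 : ℝ) * ((2:ℝ) + 3 * (Real.pi/2)) + L * (3 - 2 * (0 * 0))
        = 4/3 + Real.pi + 3 * L := by ring
    rw [hval] at hsum
    refine hsum.congr' ?_
    filter_upwards [self_mem_nhdsWithin] with t (ht : t ∈ Ioi 0)
    have ht' : t ≠ 0 := ht.ne'
    have hS' : (∫ s in (0:ℝ)..1, Real.sin (t * Real.log s) / t * Real.sqrt (1 - s))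
        = (∫ s in (0:ℝ)..1, Real.sin (t * Real.log s) * Real.sqrt (1 - s)) / t := by
      rw [← intervalIntegral.integral_div]
      exact intervalIntegral.integral_congr (fun s _ => by ring)
    show _ = Q t / t
    rw [hS']
    simp only [Q]
    rw [add_div]
    congr 1
    · field_simp
    · rw [div_mul_eq_mul_div]
      ring
  · have := L_ge
    have := Real.pi_gt_three
    linarith
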